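/- Let K = (O, P) be a dl-program. Then: (i) if I ⊆ HB_P is a weak answer set of K, then π*(I) is a weak answer set of π*(K); (ii) if I* ⊆ HB_{π*(P)} is a weak answer set of π*(K), then I* ∩ HB_P is a weak answer set of K. -/

import Mathlib

/-!
A formalization of description logic programs (dl-programs) in the sense of
Eiter et al., over an abstract classical first-order semantics, together with
the translations π, π*, π', σ, τ, τ', τ* and the various answer-set semantics
(weak / strong answer sets, weakly / strongly well-supported answer sets) and
Reiter's default logic.
-/

namespace DLP

attribute [local instance] Classical.propDecidable

noncomputable section

/-! ### A minimal classical first-order logic with equality -/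

/-- A relational first-order signature: relation symbols with arities,
and constant symbols (no proper function symbols). -/
structure Sig : Type 1 where
  Rel : Type
  arity : Rel → ℕ
  Const : Type

/-- First-order terms: (named) variables and constants. -/
inductive Term (σ : Sig) : Type where
  | var : ℕ → Term σ
  | const : σ.Const → Term σ

/-- First-order formulas over a signature, with (true) equality. -/
inductive Fml (σ : Sig) : Type where
  | rel : (R : σ.Rel) → (Fin (σ.arity R) → Term σ) → Fml σ
  | eq : Term σ → Term σ → Fml σ
  | falsum : Fml σ
  | imp : Fml σ → Fml σ → Fml σ
  | all : ℕ → Fml σ → Fml σ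

namespace Fml
variable {σ : Sig}

def not (f : Fml σ) : Fml σ := f.imp .falsum

def verum : Fml σ := Fml.not .falsum

def and (f g : Fml σ) : Fml σ := Fml.not (f.imp g.not)

/-- Finite (syntactic) conjunction. -/
def conjList (l : List (Fml σ)) : Fml σ := l.foldr Fml.and verum

end Fml

/-- A first-order structure: a nonempty domain together with interpretations
of the constant and relation symbols. -/
structure Struc (σ : Sig) : Type 1 where
  Dom : Type
  dne : Nonempty Dom
  cI : σ.Const → Dom
  rI : (R : σ.Rel) → (Fin (σ.arity R) → Dom) → Prop

/-- Value of a term in a structure under a variable assignment. -/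
def Term.val {σ : Sig} (M : Struc σ) (env : ℕ → M.Dom) : Term σ → M.Dom
  | .var n => env n
  | .const c => M.cI c

/-- Tarskian satisfaction. -/
def Fml.Sat {σ : Sig} (M : Struc σ) : (ℕ → M.Dom) → Fml σ → Prop
  | env, .rel R ts => M.rI R fun i => (ts i).val M env
  | env, .eq t u => t.val M env = u.val M env
  | _, .falsum => False
  | env, .imp f g => f.Sat M env → g.Sat M env
  | env, .all n f => ∀ d : M.Dom, f.Sat M (Function.update env n d)

/-- A structure models a formula if it satisfies it under every assignment. -/
def Struc.models {σ : Sig} (M : Struc σ) (φ : Fml σ) : Prop := ∀ env, φ.Sat M env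

def Struc.modelsSet {σ : Sig} (M : Struc σ) (Γ : Set (Fml σ)) : Prop := ∀ φ ∈ Γ, M.models φ

/-- Classical first-order entailment `Γ ⊨ φ`. -/
def Entails {σ : Sig} (Γ : Set (Fml σ)) (φ : Fml σ) : Prop :=
  ∀ M : Struc σ, M.modelsSet Γ → M.models φ

/-- Satisfiability of a set of sentences. -/
def SatSet {σ : Sig} (Γ : Set (Fml σ)) : Prop := ∃ M : Struc σ, M.modelsSet Γ

/-- `Th Γ` is the set of classical consequences of `Γ`. -/
def Th {σ : Sig} (Γ : Set (Fml σ)) : Set (Fml σ) := { φ | Entails Γ φ }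

/-- The relation symbols occurring in a formula. -/
def Fml.RelIn {σ : Sig} : Fml σ → Set σ.Rel
  | .rel R _ => {R}
  | .eq _ _ => ∅
  | .falsum => ∅
  | .imp f g => f.RelIn ∪ g.RelIn
  | .all _ f => f.RelIn

/-- Arity-preserving signature morphisms. -/
structure SigHom (σ τ : Sig) where
  onRel : σ.Rel → τ.Rel
  har : ∀ R, τ.arity (onRel R) = σ.arity R
  onConst : σ.Const → τ.Const

def Term.map {σ τ : Sig} (h : SigHom σ τ) : Term σ → Term τ
  | .var n => .var n
  | .const c => .const (h.onConst c)

def Fml.map {σ τ : Sig} (h : SigHom σ τ) : Fml σ → Fml τ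
  | .rel R ts => .rel (h.onRel R) fun i => (ts (Fin.cast (h.har R) i)).map h
  | .eq t u => .eq (t.map h) (u.map h)
  | .falsum => .falsum
  | .imp f g => .imp (f.map h) (g.map h)
  | .all n f => .all n (f.map h)

/-! ### Dl-programs -/

/-- The vocabulary of a dl-program: ontology relation symbols, program
predicate symbols (disjoint from the former), and a finite nonempty set of
constant symbols. -/
structure DLSig : Type 1 where
  Rel : Type
  rArity : Rel → ℕ
  PP : Type
  pArity : PP → ℕ
  Const : Type
  cne : Nonempty Const
  cfin : Fintype Const

instance (S : DLSig) : Nonempty S.Const := S.cne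
instance (S : DLSig) : Fintype S.Const := S.cfin

/-- The combined first-order signature of ontology relations and program
predicates. -/
def DLSig.fol (S : DLSig) : Sig :=
  ⟨S.Rel ⊕ S.PP, Sum.elim S.rArity S.pArity, S.Const⟩

/-- A ground program atom `p(c⃗)`. -/
structure PAtom (S : DLSig) where
  p : S.PP
  args : Fin (S.pArity p) → S.Const

/-- A program atom as a first-order sentence. -/
def PAtom.fml {S : DLSig} (a : PAtom S) : Fml S.fol :=
  .rel (Sum.inr a.p) fun i => .const (a.args i)

/-- An entry `S op p` of the input list of a dl-atom: `S` is an ontology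
relation symbol or a negated one (flag `neg`), `op` is `⊕` (`plus = true`) or
the constraint operator `⊖` (`plus = false`), and `p` is a program predicate
of the same arity. -/
structure DLEntry (S : DLSig) where
  n : ℕ
  R : S.Rel
  hR : S.rArity R = n
  neg : Bool
  plus : Bool
  p : S.PP
  hp : S.pArity p = n

/-- The ground literal `S(e⃗)` (possibly negated) for an entry. -/
def DLEntry.lit {S : DLSig} (en : DLEntry S) (e : Fin en.n → S.Const) : Fml S.fol :=
  let base : Fml S.fol := .rel (Sum.inl en.R) fun i => .const (e (Fin.cast en.hR i))
  if en.neg then base.not else base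

/-- The ground program atom `p(e⃗)` for an entry. -/
def DLEntry.patom {S : DLSig} (en : DLEntry S) (e : Fin en.n → S.Const) : PAtom S :=
  ⟨en.p, fun i => e (Fin.cast en.hp i)⟩

/-- The input `A_i(I)` contributed by the entry under interpretation `I`:
`{S(e⃗) : p(e⃗) ∈ I}` for `⊕`, and `{¬S(e⃗) : p(e⃗) ∉ I}` for `⊖`. -/
def DLEntry.input {S : DLSig} (en : DLEntry S) (I : Set (PAtom S)) : Set (Fml S.fol) :=
  if en.plus then { φ | ∃ e, en.patom e ∈ I ∧ φ = en.lit e }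
  else { φ | ∃ e, en.patom e ∉ I ∧ φ = (en.lit e).not }

/-- A ground dl-atom `DL[S₁ op₁ p₁, …, S_m op_m p_m; Q](t⃗)`, with `Q(t⃗)` a
sentence of the ontology language. -/
structure DLAtom (S : DLSig) where
  entries : List (DLEntry S)
  Q : Fml S.fol

/-- Satisfaction of a dl-atom: `I ⊨_O A` iff `O(I;λ) ⊨ Q(t⃗)`. -/
def SatDL {S : DLSig} (O : Set (Fml S.fol)) (I : Set (PAtom S)) (A : DLAtom S) : Prop :=
  Entails (O ∪ ⋃ en ∈ A.entries, en.input I) A.Q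

/-- A body element of a dl-rule: a program atom or a dl-atom. -/
inductive BElem (S : DLSig) where
  | atom : PAtom S → BElem S
  | dl : DLAtom S → BElem S

/-- A dl-rule `head ← pos, not neg`. -/
structure Rule (S : DLSig) where
  head : PAtom S
  pos : List (BElem S)
  neg : List (BElem S)

/-- Satisfaction of a body element. -/
def SatB {S : DLSig} (O : Set (Fml S.fol)) (I : Set (PAtom S)) : BElem S → Prop
  | .atom a => a ∈ I
  | .dl A => SatDL O I A

/-- The program predicates occurring in a body element (including the input
predicates of dl-atoms). -/
def BElem.preds {S : DLSig} : BElem S → Set S.PP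
  | .atom a => {a.p}
  | .dl A => { q | ∃ en ∈ A.entries, en.p = q }

/-- The program predicates occurring in a rule. -/
def Rule.preds {S : DLSig} (r : Rule S) : Set S.PP :=
  {r.head.p} ∪ (⋃ b ∈ r.pos, b.preds) ∪ (⋃ b ∈ r.neg, b.preds)

/-- The Herbrand base of a program: all ground atoms built from program
predicates occurring in `P` and the constants. -/
def HB {S : DLSig} (P : Set (Rule S)) : Set (PAtom S) :=
  { a | ∃ r ∈ P, a.p ∈ r.preds }

/-- The dl-atoms occurring in `P`. -/
def DLatoms {S : DLSig} (P : Set (Rule S)) : Set (DLAtom S) :=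
  { A | ∃ r ∈ P, BElem.dl A ∈ r.pos ∨ BElem.dl A ∈ r.neg }

/-- A dl-atom is monotonic relative to `K = (O,P)`. -/
def Monotonic {S : DLSig} (O : Set (Fml S.fol)) (P : Set (Rule S)) (A : DLAtom S) : Prop :=
  ∀ ⦃I I' : Set (PAtom S)⦄, I ⊆ I' → I' ⊆ HB P → SatDL O I A → SatDL O I' A

/-- A formula of the ontology language: no program predicate occurs in it. -/
def OntoFml {S : DLSig} (φ : Fml S.fol) : Prop := ∀ p : S.PP, Sum.inr p ∉ φ.RelIn

/-- The immediate-consequence operator of a positive program. -/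
def gamma {S : DLSig} (O : Set (Fml S.fol)) (P : Set (Rule S)) (I : Set (PAtom S)) :
    Set (PAtom S) :=
  { a | ∃ r ∈ P, r.head = a ∧ ∀ b ∈ r.pos, SatB O I b }

def gammaIter {S : DLSig} (O : Set (Fml S.fol)) (P : Set (Rule S)) : ℕ → Set (PAtom S)
  | 0 => ∅
  | k + 1 => gamma O P (gammaIter O P k)

/-- The least fixpoint of `γ`, as the union of its iterates from `∅`. -/
def lfpGamma {S : DLSig} (O : Set (Fml S.fol)) (P : Set (Rule S)) : Set (PAtom S) :=
  ⋃ k, gammaIter O P k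

/-- The strong dl-transform `sP_O^I`. -/
def sReduct {S : DLSig} (O : Set (Fml S.fol)) (P : Set (Rule S)) (I : Set (PAtom S)) :
    Set (Rule S) :=
  { r' | ∃ r ∈ P,
      (∀ A : DLAtom S, BElem.dl A ∈ r.pos → ¬ Monotonic O P A → SatDL O I A) ∧
      (∀ b ∈ r.neg, ¬ SatB O I b) ∧
      r' = ⟨r.head,
            r.pos.filter fun b => decide (match b with
              | .atom _ => True
              | .dl A => Monotonic O P A), []⟩ }

/-- The weak dl-transform `wP_O^I`. -/
def wReduct {S : DLSig} (O : Set (Fml S.fol)) (P : Set (Rule S)) (I : Set (PAtom S)) :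
    Set (Rule S) :=
  { r' | ∃ r ∈ P,
      (∀ A : DLAtom S, BElem.dl A ∈ r.pos → SatDL O I A) ∧
      (∀ b ∈ r.neg, ¬ SatB O I b) ∧
      r' = ⟨r.head,
            r.pos.filter fun b => decide (∃ a, b = BElem.atom a), []⟩ }

/-- `I` is a strong answer set of `K = (O,P)`. -/
def StrongAS {S : DLSig} (O : Set (Fml S.fol)) (P : Set (Rule S)) (I : Set (PAtom S)) : Prop :=
  I = lfpGamma O (sReduct O P I)

/-- `I` is a weak answer set of `K = (O,P)`. -/
def WeakAS {S : DLSig} (O : Set (Fml S.fol)) (P : Set (Rule S)) (I : Set (PAtom S)) : Prop :=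
  I = lfpGamma O (wReduct O P I)

end

end DLP
namespace DLP
noncomputable section
attribute [local instance] Classical.propDecidable

/-! ### The translation π (and π*) eliminating the constraint operator -/

variable {S : DLSig}

/-- The signature of `π(K)`: fresh predicates `π_p` (second summand) and fresh
propositional atoms `π_B` indexed by dl-atoms (third summand). -/
def piSig (S : DLSig) : DLSig where
  Rel := S.Rel
  rArity := S.rArity
  PP := S.PP ⊕ (S.PP ⊕ DLAtom S)
  pArity := Sum.elim S.pArity (Sum.elim S.pArity fun _ => 0)
  Const := S.Const
  cne := S.cne
  cfin := S.cfin

def piHom (S : DLSig) : SigHom S.fol (piSig S).fol :=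
  ⟨Sum.map id Sum.inl, fun R => by cases R <;> rfl, id⟩

def embA {S : DLSig} (a : PAtom S) : PAtom (piSig S) := ⟨Sum.inl a.p, a.args⟩

def embEntry (en : DLEntry S) : DLEntry (piSig S) :=
  ⟨en.n, en.R, en.hR, en.neg, en.plus, Sum.inl en.p, en.hp⟩

/-- A dl-atom, embedded unchanged. -/
def embDL (A : DLAtom S) : DLAtom (piSig S) :=
  ⟨A.entries.map embEntry, A.Q.map (piHom S)⟩

/-- `π(λ)`: replace each `S ⊖ p` by `¬S ⊕ π_p`. -/
def piEntry (en : DLEntry S) : DLEntry (piSig S) :=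
  if en.plus then embEntry en
  else ⟨en.n, en.R, en.hR, !en.neg, true, Sum.inr (Sum.inl en.p), en.hp⟩

def piDL (A : DLAtom S) : DLAtom (piSig S) :=
  ⟨A.entries.map piEntry, A.Q.map (piHom S)⟩

/-- The fresh propositional atom `π_B`. -/
def piBAtom (B : DLAtom S) : PAtom (piSig S) :=
  ⟨Sum.inr (Sum.inr B), fun i => i.elim0⟩

/-- The fresh atom `π_p(e⃗)`. -/
def piPAtom (p : S.PP) (e : Fin (S.pArity p) → S.Const) : PAtom (piSig S) :=
  ⟨Sum.inr (Sum.inl p), e⟩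

/-- `π(B)` for a positive body element (the part that stays positive). -/
def piPos (O : Set (Fml S.fol)) (P : Set (Rule S)) : BElem S → Option (BElem (piSig S))
  | .atom a => some (.atom (embA a))
  | .dl B => if Monotonic O P B then some (.dl (embDL B)) else none

/-- `π(B)` for a positive body element (the part moved under `not`). -/
def piPosNeg (O : Set (Fml S.fol)) (P : Set (Rule S)) : BElem S → Option (BElem (piSig S))
  | .dl B => if Monotonic O P B then none else some (.atom (piBAtom B))
  | _ => none

/-- `π(not B)` for a negative body element. -/
def piNeg : BElem S → BElem (piSig S)
  | .atom a => .atom (embA a)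
  | .dl B => .dl (piDL B)

/-- The main rule (i) of `π(r)`. -/
def piRuleMain (O : Set (Fml S.fol)) (P : Set (Rule S)) (r : Rule S) : Rule (piSig S) :=
  ⟨embA r.head, r.pos.filterMap (piPos O P),
    r.pos.filterMap (piPosNeg O P) ++ r.neg.map piNeg⟩

/-- `S ⊖ p` occurs in the dl-atom `A`. -/
def ominusIn (A : DLAtom S) (p : S.PP) : Prop :=
  ∃ en ∈ A.entries, en.plus = false ∧ en.p = p

/-- The program `π(P)`. -/
def piProg (O : Set (Fml S.fol)) (P : Set (Rule S)) : Set (Rule (piSig S)) :=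
  (⋃ r ∈ P, {piRuleMain O P r}) ∪
  { r' | ∃ r ∈ P, ∃ B, BElem.dl B ∈ r.pos ∧ ¬ Monotonic O P B ∧
      r' = ⟨piBAtom B, [], [.dl (piDL B)]⟩ } ∪
  { r' | ∃ r ∈ P, ∃ B, (BElem.dl B ∈ r.pos ∨ BElem.dl B ∈ r.neg) ∧ ¬ Monotonic O P B ∧
      ∃ p, ominusIn B p ∧ ∃ e, r' = ⟨piPAtom p e, [], [.atom (embA ⟨p, e⟩)]⟩ }

/-- The ontology, over the extended signature. -/
def piO (O : Set (Fml S.fol)) : Set (Fml (piSig S).fol) := Fml.map (piHom S) '' O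

/-- `π₁(I) = {π_p(c⃗) ∈ HB_{π(P)} : p(c⃗) ∉ I}`. -/
def pi1 (O : Set (Fml S.fol)) (P : Set (Rule S)) (I : Set (PAtom S)) :
    Set (PAtom (piSig S)) :=
  { a | ∃ p e, a = piPAtom p e ∧ a ∈ HB (piProg O P) ∧ (⟨p, e⟩ : PAtom S) ∉ I }

/-- `π₂(I) = {π_B ∈ HB_{π(P)} : B ∈ DL_P^? and I ⊭_O B}`. -/
def pi2 (O : Set (Fml S.fol)) (P : Set (Rule S)) (I : Set (PAtom S)) :
    Set (PAtom (piSig S)) :=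
  { a | ∃ B ∈ DLatoms P, ¬ Monotonic O P B ∧ ¬ SatDL O I B ∧
      a = piBAtom B ∧ a ∈ HB (piProg O P) }

/-- `π(I) = I ∪ π₁(I) ∪ π₂(I)`. -/
def piSet (O : Set (Fml S.fol)) (P : Set (Rule S)) (I : Set (PAtom S)) :
    Set (PAtom (piSig S)) :=
  (embA '' I) ∪ pi1 O P I ∪ pi2 O P I

/-! The translation π*, which treats every dl-atom the way π treats
nonmonotonic dl-atoms. -/

def piStarPos : BElem S → Option (BElem (piSig S))
  | .atom a => some (.atom (embA a))
  | .dl _ => none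

def piStarPosNeg : BElem S → Option (BElem (piSig S))
  | .dl B => some (.atom (piBAtom B))
  | _ => none

def piStarRuleMain (r : Rule S) : Rule (piSig S) :=
  ⟨embA r.head, r.pos.filterMap piStarPos,
    r.pos.filterMap piStarPosNeg ++ r.neg.map piNeg⟩

/-- The program `π*(P)`. -/
def piStarProg (P : Set (Rule S)) : Set (Rule (piSig S)) :=
  (⋃ r ∈ P, {piStarRuleMain r}) ∪
  { r' | ∃ r ∈ P, ∃ B, BElem.dl B ∈ r.pos ∧ r' = ⟨piBAtom B, [], [.dl (piDL B)]⟩ } ∪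
  { r' | ∃ r ∈ P, ∃ B, (BElem.dl B ∈ r.pos ∨ BElem.dl B ∈ r.neg) ∧
      ∃ p, ominusIn B p ∧ ∃ e, r' = ⟨piPAtom p e, [], [.atom (embA ⟨p, e⟩)]⟩ }

/-- `π*(I)`. -/
def piStarSet (O : Set (Fml S.fol)) (P : Set (Rule S)) (I : Set (PAtom S)) :
    Set (PAtom (piSig S)) :=
  (embA '' I) ∪
  { a | ∃ p e, a = piPAtom p e ∧ a ∈ HB (piStarProg P) ∧ (⟨p, e⟩ : PAtom S) ∉ I } ∪
  { a | ∃ B ∈ DLatoms P, ¬ SatDL O I B ∧ a = piBAtom B ∧ a ∈ HB (piStarProg P) }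

end
end DLP
namespace DLP
noncomputable section
attribute [local instance] Classical.propDecidable

variable {S : DLSig}

/-! ### The translation π' of Eiter et al. (well-founded semantics paper) -/

/-- The signature of `π'(K)`: fresh ontology relation symbols `S'_p` and fresh
program predicates `p̄`, one of each for every program predicate `p`. -/
def piPrimeSig (S : DLSig) : DLSig where
  Rel := S.Rel ⊕ S.PP
  rArity := Sum.elim S.rArity S.pArity
  PP := S.PP ⊕ S.PP
  pArity := Sum.elim S.pArity S.pArity
  Const := S.Const
  cne := S.cne
  cfin := S.cfin

def piPrimeHom (S : DLSig) : SigHom S.fol (piPrimeSig S).fol :=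
  ⟨Sum.map Sum.inl Sum.inl, fun R => by cases R <;> rfl, id⟩

def embA' (a : PAtom S) : PAtom (piPrimeSig S) := ⟨Sum.inl a.p, a.args⟩

/-- The fresh atom `p̄(e⃗)`. -/
def barA (p : S.PP) (e : Fin (S.pArity p) → S.Const) : PAtom (piPrimeSig S) :=
  ⟨Sum.inr p, e⟩

/-- Replace `S ⊖ p` by `¬S ⊕ p̄` in an input entry. -/
def piPrimeEntry (en : DLEntry S) : DLEntry (piPrimeSig S) :=
  if en.plus then ⟨en.n, Sum.inl en.R, en.hR, en.neg, true, Sum.inl en.p, en.hp⟩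
  else ⟨en.n, Sum.inl en.R, en.hR, !en.neg, true, Sum.inr en.p, en.hp⟩

def piPrimeDL (A : DLAtom S) : DLAtom (piPrimeSig S) :=
  ⟨A.entries.map piPrimeEntry, A.Q.map (piPrimeHom S)⟩

def piPrimeB : BElem S → BElem (piPrimeSig S)
  | .atom a => .atom (embA' a)
  | .dl A => .dl (piPrimeDL A)

def piPrimeRule (r : Rule S) : Rule (piPrimeSig S) :=
  ⟨embA' r.head, r.pos.map piPrimeB, r.neg.map piPrimeB⟩

/-- The auxiliary dl-atom `DL[S'_p ⊕ p; S'_p](e⃗)`. -/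
def auxDL (p : S.PP) (e : Fin (S.pArity p) → S.Const) : DLAtom (piPrimeSig S) :=
  ⟨[⟨S.pArity p, Sum.inr p, rfl, false, true, Sum.inl p, rfl⟩],
   Fml.rel (σ := (piPrimeSig S).fol) (Sum.inl (Sum.inr p)) fun i => .const (e i)⟩

/-- The program `π'(P)`. -/
def piPrimeProg (P : Set (Rule S)) : Set (Rule (piPrimeSig S)) :=
  (⋃ r ∈ P, {piPrimeRule r}) ∪
  { r' | ∃ p : S.PP, (∃ A ∈ DLatoms P, ominusIn A p) ∧
      ∃ e, r' = ⟨barA p e, [], [.dl (auxDL p e)]⟩ }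

def piPrimeO (O : Set (Fml S.fol)) : Set (Fml (piPrimeSig S).fol) :=
  Fml.map (piPrimeHom S) '' O

/-! ### The translation σ making all dl-atoms occur negatively -/

/-- The signature of `σ(K)`: a fresh propositional atom `σ_B` for every
dl-atom `B`. -/
def sigmaSig (S : DLSig) : DLSig where
  Rel := S.Rel
  rArity := S.rArity
  PP := S.PP ⊕ DLAtom S
  pArity := Sum.elim S.pArity fun _ => 0
  Const := S.Const
  cne := S.cne
  cfin := S.cfin

def sigmaHom (S : DLSig) : SigHom S.fol (sigmaSig S).fol :=
  ⟨Sum.map id Sum.inl, fun R => by cases R <;> rfl, id⟩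

def sigmaEmbA (a : PAtom S) : PAtom (sigmaSig S) := ⟨Sum.inl a.p, a.args⟩

def sigmaBAtom (B : DLAtom S) : PAtom (sigmaSig S) := ⟨Sum.inr B, fun i => i.elim0⟩

def sigmaEmbEntry (en : DLEntry S) : DLEntry (sigmaSig S) :=
  ⟨en.n, en.R, en.hR, en.neg, en.plus, Sum.inl en.p, en.hp⟩

def sigmaEmbDL (A : DLAtom S) : DLAtom (sigmaSig S) :=
  ⟨A.entries.map sigmaEmbEntry, A.Q.map (sigmaHom S)⟩

def sigmaEmbB : BElem S → BElem (sigmaSig S)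
  | .atom a => .atom (sigmaEmbA a)
  | .dl A => .dl (sigmaEmbDL A)

def sigmaRule (r : Rule S) : Rule (sigmaSig S) :=
  ⟨sigmaEmbA r.head,
   r.pos.filterMap fun b => match b with
     | .atom a => some (.atom (sigmaEmbA a))
     | .dl _ => none,
   (r.pos.filterMap fun b => match b with
     | .dl B => some (.atom (sigmaBAtom B))
     | _ => none) ++ r.neg.map sigmaEmbB⟩

/-- The program `σ(P)`. -/
def sigmaProg (P : Set (Rule S)) : Set (Rule (sigmaSig S)) :=
  (⋃ r ∈ P, {sigmaRule r}) ∪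
  { r' | ∃ B ∈ DLatoms P, r' = ⟨sigmaBAtom B, [], [.dl (sigmaEmbDL B)]⟩ }

def sigmaO (O : Set (Fml S.fol)) : Set (Fml (sigmaSig S).fol) :=
  Fml.map (sigmaHom S) '' O

end
end DLP
namespace DLP
noncomputable section
attribute [local instance] Classical.propDecidable

/-! ### The congruence rewriting of equality -/

/-- Extend a signature by a fresh binary relation symbol `≈`. -/
def eqExt (σ : Sig) : Sig where
  Rel := σ.Rel ⊕ Unit
  arity := Sum.elim σ.arity fun _ => 2
  Const := σ.Const

def eqHom (σ : Sig) : SigHom σ (eqExt σ) := ⟨Sum.inl, fun _ => rfl, id⟩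

/-- The atom `t ≈ u`. -/
def approx {σ : Sig} (t u : Term (eqExt σ)) : Fml (eqExt σ) :=
  .rel (Sum.inr ()) ![t, u]

/-- Replace (true) equality by the fresh symbol `≈` throughout a formula. -/
def replaceEq {σ : Sig} : Fml σ → Fml (eqExt σ)
  | .rel R ts => .rel (Sum.inl R) fun i => (ts i).map (eqHom σ)
  | .eq t u => approx (t.map (eqHom σ)) (u.map (eqHom σ))
  | .falsum => .falsum
  | .imp f g => .imp (replaceEq f) (replaceEq g)
  | .all n f => .all n (replaceEq f)

def allsList {σ : Sig} (l : List ℕ) (f : Fml σ) : Fml σ := l.foldr Fml.all f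

/-- The reflexivity axiom `∀x (x ≈ x)`. -/
def approxRefl {σ : Sig} : Fml (eqExt σ) := .all 0 (approx (.var 0) (.var 0))

/-- The predicate-replacement (congruence) axiom for a relation symbol `R`:
`∀x⃗ y⃗ ((x⃗ ≈ y⃗) ⊃ (R(x⃗) ⊃ R(y⃗)))`. -/
def congrAx {σ : Sig} (R : σ.Rel) : Fml (eqExt σ) :=
  allsList (List.range (2 * σ.arity R)) <|
    (Fml.conjList ((List.finRange (σ.arity R)).map fun i =>
        approx (.var (i : ℕ)) (.var (σ.arity R + (i : ℕ))))).imp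
      ((Fml.rel (σ := eqExt σ) (Sum.inl R) fun i => .var (i : ℕ)).imp
        (Fml.rel (σ := eqExt σ) (Sum.inl R) fun i => .var (σ.arity R + (i : ℕ))))

variable {S : DLSig}

/-- `τ(O)`: the congruence rewriting of the ontology, together with the
reflexivity and predicate-replacement axioms for the relation symbols of the
ontology language occurring in `O`. -/
def tauO (O : Set (Fml S.fol)) : Set (Fml (eqExt S.fol)) :=
  (replaceEq '' O) ∪ {approxRefl} ∪
  { φ | ∃ R : S.Rel, (∃ ψ ∈ O, Sum.inl R ∈ ψ.RelIn) ∧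
      φ = congrAx (σ := S.fol) (Sum.inl R) }

/-- `τ(S op p)`: the conjunction over `p(c⃗) ∈ HB_P` of `p(c⃗) ⊃ S(c⃗)` (for
`⊕`), resp. `¬p(c⃗) ⊃ ¬S(c⃗)` (for `⊖`). -/
def tauEntry (P : Set (Rule S)) (en : DLEntry S) : Fml S.fol :=
  Fml.conjList
    (((Finset.univ : Finset (Fin en.n → S.Const)).toList.filter
        fun e => decide (en.patom e ∈ HB P)).map
      fun e =>
        if en.plus then ((en.patom e).fml).imp (en.lit e)
        else ((en.patom e).fml).not.imp (en.lit e).not)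

/-- `τ(A)` for a dl-atom `A = DL[λ; Q](t⃗)`. -/
def tauDL (P : Set (Rule S)) (A : DLAtom S) : Fml (eqExt S.fol) :=
  ((Fml.conjList (A.entries.map (tauEntry P))).map (eqHom S.fol)).imp (replaceEq A.Q)

/-- A program atom, as a sentence over the language with `≈`. -/
def PAtom.efml (a : PAtom S) : Fml (eqExt S.fol) := a.fml.map (eqHom S.fol)

/-- `τ(B)` for a body element. -/
def tauB (P : Set (Rule S)) : BElem S → Fml (eqExt S.fol)
  | .atom a => a.efml
  | .dl A => tauDL P A

/-! ### Default logic -/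

/-- A (closed) default `α : β₁,…,β_n / γ`. -/
structure Dft (σ : Sig) where
  pre : Fml σ
  jus : List (Fml σ)
  con : Fml σ

/-- A (closed) default theory `(D, W)`. -/
structure DThy (σ : Sig) where
  D : Set (Dft σ)
  W : Set (Fml σ)

/-- The stages `E_i` of the extension construction relative to a candidate
extension `E`. -/
def extStage {σ : Sig} (Δ : DThy σ) (E : Set (Fml σ)) : ℕ → Set (Fml σ)
  | 0 => Δ.W
  | i + 1 => Th (extStage Δ E i) ∪
      { γ | ∃ d ∈ Δ.D, d.pre ∈ extStage Δ E i ∧ (∀ β ∈ d.jus, Fml.not β ∉ E) ∧ γ = d.con }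

/-- `E` is an extension of the default theory `Δ`. -/
def IsExtension {σ : Sig} (Δ : DThy σ) (E : Set (Fml σ)) : Prop :=
  E = ⋃ i, extStage Δ E i

/-- The default theory `τ(K) = (τ(P), τ(O))`. -/
def tauThy (O : Set (Fml S.fol)) (P : Set (Rule S)) : DThy (eqExt S.fol) where
  D := { d | ∃ r ∈ P,
      d = ⟨Fml.conjList (r.pos.map (tauB P)),
           r.neg.map fun b => (tauB P b).not, r.head.efml⟩ }
  W := tauO O

/-- The default theory `τ*(K)`: `τ(K)` plus the defaults `: ¬p(c⃗) / ¬p(c⃗)`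
for every `p(c⃗) ∈ HB_P`. -/
def tauStarThy (O : Set (Fml S.fol)) (P : Set (Rule S)) : DThy (eqExt S.fol) where
  D := (tauThy O P).D ∪
    { d | ∃ a ∈ HB P, d = ⟨Fml.verum, [(PAtom.efml a).not], (PAtom.efml a).not⟩ }
  W := tauO O

/-! ### The translation τ' (no congruence rewriting; the ontology is moved
into the antecedents of the translated dl-atoms) -/

/-- `τ'(A)` for a dl-atom `A`; here the finite ontology `O` is identified with
the conjunction of its sentences and equality is kept as true equality. -/
def tauDL' (O : Finset (Fml S.fol)) (P : Set (Rule S)) (A : DLAtom S) : Fml S.fol :=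
  ((Fml.conjList O.toList).and (Fml.conjList (A.entries.map (tauEntry P)))).imp A.Q

def tauB' (O : Finset (Fml S.fol)) (P : Set (Rule S)) : BElem S → Fml S.fol
  | .atom a => a.fml
  | .dl A => tauDL' O P A

/-- The default theory `τ'(K) = (D, ∅)`. -/
def tauThy' (O : Finset (Fml S.fol)) (P : Set (Rule S)) : DThy S.fol where
  D := { d | ∃ r ∈ P,
      d = ⟨Fml.conjList (r.pos.map (tauB' O P)),
           r.neg.map fun b => (tauB' O P b).not, r.head.fml⟩ }
  W := ∅

/-! ### Well-supported semantics -/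

/-- `I` is a model of `K = (O,P)`. -/
def IsModel (O : Set (Fml S.fol)) (P : Set (Rule S)) (I : Set (PAtom S)) : Prop :=
  ∀ r ∈ P, (∀ b ∈ r.pos, SatB O I b) → (∀ b ∈ r.neg, ¬ SatB O I b) → r.head ∈ I

/-- `(E, I)` up-to satisfies a body element. -/
def UpSat (O : Set (Fml S.fol)) (E I : Set (PAtom S)) : BElem S → Prop
  | .atom a => a ∈ E
  | .dl A => ∀ F, E ⊆ F → F ⊆ I → SatDL O F A

/-- `(E, I)` up-to satisfies the default negation of a body element. -/
def UpSatN (O : Set (Fml S.fol)) (I' I : Set (PAtom S)) : BElem S → Prop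
  | .atom a => a ∉ I
  | .dl A => ¬ ∃ F, I' ⊆ F ∧ F ⊆ I ∧ SatDL O F A

/-- The operator `T_K`. -/
def TK (O : Set (Fml S.fol)) (P : Set (Rule S)) (E I : Set (PAtom S)) : Set (PAtom S) :=
  { a | ∃ r ∈ P, r.head = a ∧ (∀ b ∈ r.pos, UpSat O E I b) ∧ (∀ b ∈ r.neg, UpSatN O E I b) }

def TKiter (O : Set (Fml S.fol)) (P : Set (Rule S)) (I : Set (PAtom S)) : ℕ → Set (PAtom S)
  | 0 => ∅
  | k + 1 => TK O P (TKiter O P I k) I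

/-- `T_K^∞(∅, I)`. -/
def TKinf (O : Set (Fml S.fol)) (P : Set (Rule S)) (I : Set (PAtom S)) : Set (PAtom S) :=
  ⋃ k, TKiter O P I k

/-- The reduct `P^I` dropping negative bodies. -/
def negReduct (O : Set (Fml S.fol)) (P : Set (Rule S)) (I : Set (PAtom S)) : Set (Rule S) :=
  { r' | ∃ r ∈ P, (∀ b ∈ r.neg, ¬ SatB O I b) ∧ r' = ⟨r.head, r.pos, []⟩ }

/-- `I` is a weakly well-supported answer set of `K`. -/
def WWS (O : Set (Fml S.fol)) (P : Set (Rule S)) (I : Set (PAtom S)) : Prop :=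
  IsModel O P I ∧ I = TKinf O (negReduct O P I) I

/-- `I` is a strongly well-supported answer set of `K`. -/
def SWS (O : Set (Fml S.fol)) (P : Set (Rule S)) (I : Set (PAtom S)) : Prop :=
  IsModel O P I ∧ I = TKinf O P I

end
end DLP
namespace DLP
noncomputable section
attribute [local instance] Classical.propDecidable

variable {σ τ : Sig}

/-- Pull back a structure along a signature morphism. -/
def Struc.restrict (h : SigHom σ τ) (M : Struc τ) : Struc σ where
  Dom := M.Dom
  dne := M.dne
  cI := fun c => M.cI (h.onConst c)
  rI := fun R f => M.rI (h.onRel R) (fun i => f (Fin.cast (h.har R) i))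

lemma Term.val_map (h : SigHom σ τ) (M : Struc τ) (env : ℕ → M.Dom) (t : Term σ) :
    (t.map h).val M env = t.val (Struc.restrict h M) env := by
  cases t <;> rfl

lemma Fml.sat_map (h : SigHom σ τ) (M : Struc τ) (φ : Fml σ) :
    ∀ env : ℕ → M.Dom, (φ.map h).Sat M env ↔ φ.Sat (Struc.restrict h M) env := by
  induction φ with
  | rel R ts =>
      intro env
      show M.rI (h.onRel R) _ ↔ M.rI (h.onRel R) _
      exact iff_of_eq (congrArg _ (funext fun i => Term.val_map h M env _))
  | eq t u => intro env; show _ = _ ↔ _ = _; rw [Term.val_map, Term.val_map]; exact Iff.rfl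
  | falsum => intro env; exact Iff.rfl
  | imp f g ihf ihg => intro env; exact imp_congr (ihf env) (ihg env)
  | all n f ih =>
      intro env
      exact forall_congr' fun d => ih _

lemma sat_not_not (M : Struc σ) (f : Fml σ) (env : ℕ → M.Dom) :
    f.not.not.Sat M env ↔ f.Sat M env := by
  show ((f.Sat M env → False) → False) ↔ _
  tauto

lemma entails_congr {Γ Γ' : Set (Fml σ)} (φ : Fml σ)
    (h : ∀ M : Struc σ, M.modelsSet Γ ↔ M.modelsSet Γ') :
    Entails Γ φ ↔ Entails Γ' φ :=
  ⟨fun hE M hM => hE M ((h M).2 hM), fun hE M hM => hE M ((h M).1 hM)⟩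

end
end DLP
namespace DLP
noncomputable section
attribute [local instance] Classical.propDecidable

variable {S : DLSig}

/-- Extend a structure of the base signature to the π-signature. -/
def extStruc (N : Struc S.fol) : Struc (piSig S).fol where
  Dom := N.Dom
  dne := N.dne
  cI := N.cI
  rI := fun R => match R with
    | Sum.inl r => fun f => N.rI (Sum.inl r) f
    | Sum.inr (Sum.inl p) => fun f => N.rI (Sum.inr p) f
    | Sum.inr (Sum.inr _) => fun _ => False

lemma Term.val_map_ext (N : Struc S.fol) (env : ℕ → N.Dom) (t : Term S.fol) :
    (t.map (piHom S)).val (extStruc N) env = t.val N env := by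
  cases t <;> rfl

lemma Fml.sat_map_ext (N : Struc S.fol) (φ : Fml S.fol) :
    ∀ env : ℕ → N.Dom, (φ.map (piHom S)).Sat (extStruc N) env ↔ φ.Sat N env := by
  induction φ with
  | rel R ts =>
      intro env
      cases R with
      | inl r =>
          show N.rI (Sum.inl r) _ ↔ N.rI (Sum.inl r) _
          exact iff_of_eq (congrArg _ (funext fun i => Term.val_map_ext N env _))
      | inr p =>
          show N.rI (Sum.inr p) _ ↔ N.rI (Sum.inr p) _
          exact iff_of_eq (congrArg _ (funext fun i => Term.val_map_ext N env _))
  | eq t u => intro env; show _ = _ ↔ _ = _; rw [Term.val_map_ext, Term.val_map_ext]; exact Iff.rfl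
  | falsum => intro env; exact Iff.rfl
  | imp f g ihf ihg => intro env; exact imp_congr (ihf env) (ihg env)
  | all n f ih => intro env; exact forall_congr' fun d => ih _

/-- Entailment is invariant under the π-signature embedding. -/
lemma entails_map_pi (Γ : Set (Fml S.fol)) (φ : Fml S.fol) :
    Entails (Fml.map (piHom S) '' Γ) (φ.map (piHom S)) ↔ Entails Γ φ := by
  constructor
  · intro hE N hN env
    have h1 : (extStruc N).modelsSet (Fml.map (piHom S) '' Γ) := by
      rintro ψ ⟨ψ₀, hψ₀, rfl⟩ env'
      exact (Fml.sat_map_ext N ψ₀ env').2 (hN ψ₀ hψ₀ env')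
    exact (Fml.sat_map_ext N φ env).1 (hE (extStruc N) h1 env)
  · intro hE M hM env
    have h1 : (Struc.restrict (piHom S) M).modelsSet Γ := by
      intro ψ hψ env'
      exact (Fml.sat_map (piHom S) M ψ env').1 (hM _ ⟨ψ, hψ, rfl⟩ env')
    exact (Fml.sat_map (piHom S) M φ env).2 (hE _ h1 env)

end
end DLP
namespace DLP
noncomputable section
attribute [local instance] Classical.propDecidable

variable {S : DLSig}

/-- `p` occurs behind `⊖` in some dl-atom of `P`. -/
def Hcond (P : Set (Rule S)) (p : S.PP) : Prop :=
  ∃ r ∈ P, ∃ B, (BElem.dl B ∈ r.pos ∨ BElem.dl B ∈ r.neg) ∧ ominusIn B p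

/-- `B` occurs in a positive body in `P`. -/
def HcondB (P : Set (Rule S)) (B : DLAtom S) : Prop :=
  ∃ r ∈ P, BElem.dl B ∈ r.pos

lemma embA_inj {a b : PAtom S} (h : embA a = embA b) : a = b := by
  cases a; cases b
  simp only [embA, PAtom.mk.injEq] at h
  obtain ⟨h1, h2⟩ := h
  rfl

lemma piPAtom_inj {p q : S.PP} {e f} (h : piPAtom p e = piPAtom q f) :
    (⟨p, e⟩ : PAtom S) = ⟨q, f⟩ := by
  simp only [piPAtom, PAtom.mk.injEq] at h
  obtain ⟨h1, h2⟩ := h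
  rfl

lemma piBAtom_inj {B C : DLAtom S} (h : piBAtom B = piBAtom C) : B = C := by
  have h2 : (piBAtom B).p = (piBAtom C).p := congrArg PAtom.p h
  simp only [piBAtom] at h2
  injection h2 with h3; injection h3 with h4

lemma embA_ne_piPAtom {a : PAtom S} {p e} : embA a ≠ piPAtom p e := by
  intro h
  have h2 : (embA a).p = (piPAtom p e).p := congrArg PAtom.p h
  simp only [embA, piPAtom] at h2
  injection h2

lemma embA_ne_piBAtom {a : PAtom S} {B} : embA a ≠ piBAtom B := by
  intro h
  have h2 : (embA a).p = (piBAtom B).p := congrArg PAtom.p h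
  simp only [embA, piBAtom] at h2
  injection h2

lemma piPAtom_ne_piBAtom {p : S.PP} {e B} : piPAtom p e ≠ piBAtom B := by
  intro h
  have h2 : (piPAtom p e).p = (piBAtom B).p := congrArg PAtom.p h
  simp only [piPAtom, piBAtom] at h2
  injection h2 with h3; injection h3

/-- The double-negation-free version of the negated literal of an entry. -/
def DLEntry.lit2 (en : DLEntry S) (e : Fin en.n → S.Const) : Fml S.fol :=
  let base : Fml S.fol := .rel (Sum.inl en.R) fun i => .const (e (Fin.cast en.hR i))
  if en.neg then base else base.not

/-- A modelwise-equivalent version of `DLEntry.input`. -/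
def inputAlt (en : DLEntry S) (I : Set (PAtom S)) : Set (Fml S.fol) :=
  if en.plus then en.input I else { φ | ∃ e, en.patom e ∉ I ∧ φ = en.lit2 e }

/-- The `¬S ⊕ π_p` entry produced by `π` from a `⊖` entry. -/
def minusEntry (en : DLEntry S) : DLEntry (piSig S) :=
  ⟨en.n, en.R, en.hR, !en.neg, true, Sum.inr (Sum.inl en.p), en.hp⟩

lemma piEntry_plus {en : DLEntry S} (h : en.plus = true) : piEntry en = embEntry en := by
  simp [piEntry, h]

lemma piEntry_minus {en : DLEntry S} (h : en.plus = false) : piEntry en = minusEntry en := by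
  simp [piEntry, h, minusEntry]

lemma embEntry_lit (en : DLEntry S) (e : Fin en.n → S.Const) :
    (embEntry en).lit e = (en.lit e).map (piHom S) := by
  simp only [DLEntry.lit, embEntry, apply_ite (Fml.map (piHom S))]
  by_cases hn : en.neg = true <;> simp only [hn, if_true, if_false] <;> rfl

lemma minusEntry_lit (en : DLEntry S) (e : Fin en.n → S.Const) :
    (minusEntry en).lit e = (en.lit2 e).map (piHom S) := by
  simp only [DLEntry.lit, DLEntry.lit2, minusEntry, apply_ite (Fml.map (piHom S))]
  by_cases hn : en.neg = true <;> simp [hn] <;> rfl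

lemma embEntry_patom (en : DLEntry S) (e : Fin en.n → S.Const) :
    (embEntry en).patom e = embA (en.patom e) := rfl

lemma minusEntry_patom (en : DLEntry S) (e : Fin en.n → S.Const) :
    (minusEntry en).patom e = piPAtom en.p (fun i => e (Fin.cast en.hp i)) := rfl

end
end DLP
namespace DLP
noncomputable section
attribute [local instance] Classical.propDecidable

variable {S : DLSig}

lemma input_embEntry (en : DLEntry S) (hplus : en.plus = true) {I : Set (PAtom S)}
    {Istar : Set (PAtom (piSig S))} (P1 : ∀ x : PAtom S, embA x ∈ Istar ↔ x ∈ I) :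
    (embEntry en).input Istar = Fml.map (piHom S) '' en.input I := by
  have hp : (embEntry en).plus = true := hplus
  ext φ
  simp only [DLEntry.input, hp, hplus, if_pos, Set.mem_setOf_eq, Set.mem_image]
  constructor
  · rintro ⟨e, he, rfl⟩
    exact ⟨en.lit e, ⟨e, (P1 _).1 (by exact he), rfl⟩,
      (embEntry_lit en e).symm⟩
  · rintro ⟨ψ, ⟨e, he, rfl⟩, rfl⟩
    exact ⟨e, by rw [embEntry_patom]; exact (P1 _).2 he, (embEntry_lit en e).symm⟩

lemma input_minusEntry (en : DLEntry S) {P : Set (Rule S)} {I : Set (PAtom S)}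
    {Istar : Set (PAtom (piSig S))}
    (P2 : ∀ (p : S.PP) (e), piPAtom p e ∈ Istar ↔ Hcond P p ∧ (⟨p, e⟩ : PAtom S) ∉ I)
    (hc : Hcond P en.p) :
    (minusEntry en).input Istar
      = Fml.map (piHom S) '' { φ | ∃ e, en.patom e ∉ I ∧ φ = en.lit2 e } := by
  have hp : (minusEntry en).plus = true := rfl
  ext φ
  simp only [DLEntry.input, hp, if_pos, Set.mem_setOf_eq, Set.mem_image]
  constructor
  · rintro ⟨e, he, rfl⟩
    replace he : piPAtom en.p (fun i => e (Fin.cast en.hp i)) ∈ Istar := he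
    have h2 := ((P2 _ _).1 he).2
    exact ⟨en.lit2 e, ⟨e, h2, rfl⟩, (minusEntry_lit en e).symm⟩
  · rintro ⟨ψ, ⟨e, he, rfl⟩, rfl⟩
    refine ⟨e, ?_, (minusEntry_lit en e).symm⟩
    rw [minusEntry_patom]
    exact (P2 _ _).2 ⟨hc, he⟩

lemma modelsSet_union {σ : Sig} (M : Struc σ) (Γ Δ : Set (Fml σ)) :
    M.modelsSet (Γ ∪ Δ) ↔ M.modelsSet Γ ∧ M.modelsSet Δ := by
  constructor
  · intro h; exact ⟨fun φ hφ => h φ (Or.inl hφ), fun φ hφ => h φ (Or.inr hφ)⟩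
  · rintro ⟨h1, h2⟩ φ (hφ | hφ); exacts [h1 φ hφ, h2 φ hφ]

lemma modelsSet_biUnion {σ : Sig} (M : Struc σ) {α : Type} (l : List α)
    (s : α → Set (Fml σ)) :
    M.modelsSet (⋃ a ∈ l, s a) ↔ ∀ a ∈ l, M.modelsSet (s a) := by
  constructor
  · intro h a ha φ hφ; exact h φ (Set.mem_biUnion ha hφ)
  · intro h φ hφ
    rw [Set.mem_iUnion₂] at hφ
    obtain ⟨a, ha, hφ⟩ := hφ
    exact h a ha φ hφ

lemma models_lit2_iff (M : Struc S.fol) (en : DLEntry S) (e : Fin en.n → S.Const) :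
    M.models (en.lit2 e) ↔ M.models (en.lit e).not := by
  cases hn : en.neg
  · simp [DLEntry.lit2, DLEntry.lit, hn]
  · simp only [DLEntry.lit2, DLEntry.lit, hn, if_pos]
    constructor
    · intro h env; exact (sat_not_not M _ env).2 (h env)
    · intro h env; exact (sat_not_not M _ env).1 (h env)

lemma models_inputAlt_iff (M : Struc S.fol) (en : DLEntry S) (I : Set (PAtom S)) :
    M.modelsSet (inputAlt en I) ↔ M.modelsSet (en.input I) := by
  cases hpl : en.plus
  · simp only [inputAlt, hpl, Bool.false_eq_true, if_false]
    have hin : en.input I = { φ | ∃ e, en.patom e ∉ I ∧ φ = (en.lit e).not } := by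
      simp only [DLEntry.input, hpl, Bool.false_eq_true, if_false]
    rw [hin]
    constructor
    · rintro h φ ⟨e, he, rfl⟩
      exact (models_lit2_iff M en e).1 (h _ ⟨e, he, rfl⟩)
    · rintro h φ ⟨e, he, rfl⟩
      exact (models_lit2_iff M en e).2 (h _ ⟨e, he, rfl⟩)
  · simp only [inputAlt, hpl, if_pos]

/-- The key semantic lemma: satisfaction of `π(B)` under `I*` matches
satisfaction of `B` under `I`. -/
lemma satDL_pi (O : Set (Fml S.fol)) (P : Set (Rule S)) (B : DLAtom S)
    {I : Set (PAtom S)} {Istar : Set (PAtom (piSig S))}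
    (P1 : ∀ x : PAtom S, embA x ∈ Istar ↔ x ∈ I)
    (P2 : ∀ (p : S.PP) (e), piPAtom p e ∈ Istar ↔ Hcond P p ∧ (⟨p, e⟩ : PAtom S) ∉ I)
    (hB : ∀ p, ominusIn B p → Hcond P p) :
    SatDL (piO O) Istar (piDL B) ↔ SatDL O I B := by
  unfold SatDL piDL
  have hun : (⋃ en' ∈ (B.entries.map piEntry), DLEntry.input en' Istar)
      = Fml.map (piHom S) '' (⋃ en ∈ B.entries, inputAlt en I) := by
    rw [Set.image_iUnion₂]
    apply Set.ext; intro φ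
    simp only [Set.mem_iUnion, List.mem_map, exists_prop]
    constructor
    · rintro ⟨en', ⟨⟨en, hen, rfl⟩, hφ⟩⟩
      refine ⟨en, hen, ?_⟩
      cases hpl : en.plus
      · rw [piEntry_minus hpl] at hφ
        rw [input_minusEntry en P2 (hB en.p ⟨en, hen, hpl, rfl⟩)] at hφ
        simpa [inputAlt, hpl] using hφ
      · rw [piEntry_plus hpl, input_embEntry en hpl P1] at hφ
        simpa [inputAlt, hpl] using hφ
    · rintro ⟨en, hen, hφ⟩
      refine ⟨piEntry en, ⟨⟨en, hen, rfl⟩, ?_⟩⟩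
      cases hpl : en.plus
      · rw [piEntry_minus hpl, input_minusEntry en P2 (hB en.p ⟨en, hen, hpl, rfl⟩)]
        simpa [inputAlt, hpl] using hφ
      · rw [piEntry_plus hpl, input_embEntry en hpl P1]
        simpa [inputAlt, hpl] using hφ
  rw [hun]
  have himg : piO O ∪ Fml.map (piHom S) '' (⋃ en ∈ B.entries, inputAlt en I)
      = Fml.map (piHom S) '' (O ∪ ⋃ en ∈ B.entries, inputAlt en I) := by
    rw [Set.image_union]; rfl
  rw [himg, entails_map_pi]
  apply entails_congr
  intro M
  rw [modelsSet_union, modelsSet_union]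
  apply and_congr_right'
  rw [modelsSet_biUnion, modelsSet_biUnion]
  exact forall_congr' fun en => forall_congr' fun hen => models_inputAlt_iff M en I

end
end DLP
namespace DLP
noncomputable section
attribute [local instance] Classical.propDecidable

variable {S : DLSig}

/-- A program all of whose rules have purely atomic positive bodies. -/
def AtomProg (R : Set (Rule S)) : Prop :=
  ∀ r ∈ R, ∀ b ∈ r.pos, ∃ a, b = BElem.atom a

lemma wReduct_atomProg (O : Set (Fml S.fol)) (P : Set (Rule S)) (I : Set (PAtom S)) :
    AtomProg (wReduct O P I) := by
  rintro r' ⟨r, hr, h1, h2, rfl⟩ b hb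
  simp only [List.mem_filter, decide_eq_true_eq] at hb
  exact hb.2

lemma gamma_mono {O : Set (Fml S.fol)} {R : Set (Rule S)} (hR : AtomProg R)
    {J J' : Set (PAtom S)} (h : J ⊆ J') : gamma O R J ⊆ gamma O R J' := by
  rintro a ⟨r, hr, hhead, hpos⟩
  refine ⟨r, hr, hhead, fun b hb => ?_⟩
  obtain ⟨x, rfl⟩ := hR r hr b hb
  exact h (hpos _ hb)

lemma gammaIter_succ_mono {O : Set (Fml S.fol)} {R : Set (Rule S)} (hR : AtomProg R) :
    ∀ k, gammaIter O R k ⊆ gammaIter O R (k + 1) := by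
  intro k
  induction k with
  | zero => exact Set.empty_subset _
  | succ k ih => exact gamma_mono hR ih

lemma gammaIter_mono {O : Set (Fml S.fol)} {R : Set (Rule S)} (hR : AtomProg R)
    {k l : ℕ} (h : k ≤ l) : gammaIter O R k ⊆ gammaIter O R l := by
  induction l with
  | zero => rw [Nat.le_zero.mp h]
  | succ l ih =>
      rcases Nat.lt_or_ge k (l + 1) with h' | h'
      · exact (ih (Nat.lt_succ_iff.mp h')).trans (gammaIter_succ_mono hR l)
      · rw [Nat.le_antisymm h h']

lemma mem_lfpGamma_iff {O : Set (Fml S.fol)} {R : Set (Rule S)} {a : PAtom S} :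
    a ∈ lfpGamma O R ↔ ∃ k, a ∈ gammaIter O R k := Set.mem_iUnion

lemma lfpGamma_closed {O : Set (Fml S.fol)} {R : Set (Rule S)} (hR : AtomProg R)
    {r : Rule S} (hr : r ∈ R) (hpos : ∀ b ∈ r.pos, SatB O (lfpGamma O R) b) :
    r.head ∈ lfpGamma O R := by
  have hstep : ∀ l : List (BElem S), (∀ b ∈ l, ∃ a, b = BElem.atom a) →
      (∀ b ∈ l, SatB O (lfpGamma O R) b) →
      ∃ K, ∀ b ∈ l, SatB O (gammaIter O R K) b := by
    intro l
    induction l with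
    | nil => exact fun _ _ => ⟨0, by simp⟩
    | cons b t ih =>
        intro hat hsat
        obtain ⟨K, hK⟩ := ih (fun c hc => hat c (List.mem_cons_of_mem _ hc))
          (fun c hc => hsat c (List.mem_cons_of_mem _ hc))
        obtain ⟨x, rfl⟩ := hat b List.mem_cons_self
        have hx : x ∈ lfpGamma O R := hsat _ List.mem_cons_self
        obtain ⟨K', hK'⟩ := mem_lfpGamma_iff.mp hx
        refine ⟨max K K', fun c hc => ?_⟩
        rcases List.mem_cons.mp hc with rfl | hc
        · exact gammaIter_mono hR (le_max_right K K') hK'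
        · obtain ⟨y, rfl⟩ := hat c (List.mem_cons_of_mem _ hc)
          exact gammaIter_mono hR (le_max_left K K') (hK _ hc)
  obtain ⟨K, hK⟩ := hstep r.pos (hR r hr) hpos
  exact mem_lfpGamma_iff.mpr ⟨K + 1, r, hr, rfl, hK⟩

lemma head_mem_lfpGamma {O : Set (Fml S.fol)} {R : Set (Rule S)}
    {r : Rule S} (hr : r ∈ R) (hpos : r.pos = []) : r.head ∈ lfpGamma O R :=
  mem_lfpGamma_iff.mpr ⟨1, r, hr, rfl, by simp [hpos]⟩

lemma lfpGamma_wReduct_sub_HB (O : Set (Fml S.fol)) (P : Set (Rule S)) (I : Set (PAtom S)) :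
    lfpGamma O (wReduct O P I) ⊆ HB P := by
  intro a ha
  obtain ⟨k, hk⟩ := mem_lfpGamma_iff.mp ha
  cases k with
  | zero => exact absurd hk (Set.notMem_empty a)
  | succ k =>
      obtain ⟨r', ⟨r, hr, _, _, rfl⟩, hhead, _⟩ := hk
      exact ⟨r, hr, by rw [← hhead]; exact Or.inl (Or.inl rfl)⟩

end
end DLP
namespace DLP
noncomputable section
attribute [local instance] Classical.propDecidable

variable {S : DLSig}

lemma mem_piStarProg {P : Set (Rule S)} {r' : Rule (piSig S)} :
    r' ∈ piStarProg P ↔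
      (∃ r ∈ P, r' = piStarRuleMain r) ∨
      (∃ r ∈ P, ∃ B, BElem.dl B ∈ r.pos ∧ r' = ⟨piBAtom B, [], [.dl (piDL B)]⟩) ∨
      (∃ r ∈ P, ∃ B, (BElem.dl B ∈ r.pos ∨ BElem.dl B ∈ r.neg) ∧
        ∃ p, ominusIn B p ∧ ∃ e, r' = ⟨piPAtom p e, [], [.atom (embA ⟨p, e⟩)]⟩) := by
  constructor
  · rintro ((h | h) | h)
    · left; simpa using h
    · right; left; exact h
    · right; right; exact h
  · rintro (h | h | h)
    · exact Or.inl (Or.inl (by simpa using h))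
    · exact Or.inl (Or.inr h)
    · exact Or.inr h

lemma mem_filterMap_piStarPos {l : List (BElem S)} {b : BElem (piSig S)} :
    b ∈ l.filterMap piStarPos ↔ ∃ a, BElem.atom a ∈ l ∧ b = .atom (embA a) := by
  rw [List.mem_filterMap]
  constructor
  · rintro ⟨x, hx, hfx⟩
    cases x with
    | atom a =>
        refine ⟨a, hx, ?_⟩
        simp only [piStarPos] at hfx
        exact (Option.some.inj hfx).symm
    | dl B => simp [piStarPos] at hfx
  · rintro ⟨a, ha, rfl⟩; exact ⟨.atom a, ha, rfl⟩

lemma mem_filterMap_piStarPosNeg {l : List (BElem S)} {b : BElem (piSig S)} :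
    b ∈ l.filterMap piStarPosNeg ↔ ∃ B, BElem.dl B ∈ l ∧ b = .atom (piBAtom B) := by
  rw [List.mem_filterMap]
  constructor
  · rintro ⟨x, hx, hfx⟩
    cases x with
    | atom a => simp [piStarPosNeg] at hfx
    | dl B =>
        refine ⟨B, hx, ?_⟩
        simp only [piStarPosNeg] at hfx
        exact (Option.some.inj hfx).symm
  · rintro ⟨B, hB, rfl⟩; exact ⟨.dl B, hB, rfl⟩

lemma mem_preds_iff {S' : DLSig} {r : Rule S'} {q : S'.PP} :
    q ∈ r.preds ↔ q = r.head.p ∨ (∃ b ∈ r.pos, q ∈ b.preds) ∨ (∃ b ∈ r.neg, q ∈ b.preds) := by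
  simp only [Rule.preds, Set.mem_union, Set.mem_iUnion, Set.mem_singleton_iff, exists_prop]
  rw [or_assoc]

lemma preds_atom {S' : DLSig} {a : PAtom S'} {q : S'.PP} :
    q ∈ BElem.preds (.atom a) ↔ q = a.p := by
  simp [BElem.preds, eq_comm]

lemma preds_dl {S' : DLSig} {A : DLAtom S'} {q : S'.PP} :
    q ∈ BElem.preds (.dl A) ↔ ∃ en ∈ A.entries, en.p = q := by
  simp [BElem.preds]

lemma preds_piDL {B : DLAtom S} {q : (piSig S).PP} :
    q ∈ BElem.preds (.dl (piDL B)) ↔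
      (∃ en ∈ B.entries, en.plus = true ∧ q = Sum.inl en.p) ∨
      (∃ en ∈ B.entries, en.plus = false ∧ q = Sum.inr (Sum.inl en.p)) := by
  rw [preds_dl]
  constructor
  · rintro ⟨en', hen', rfl⟩
    simp only [piDL, List.mem_map] at hen'
    obtain ⟨en, hen, rfl⟩ := hen'
    cases hpl : en.plus
    · rw [piEntry_minus hpl]; exact Or.inr ⟨en, hen, hpl, rfl⟩
    · rw [piEntry_plus hpl]; exact Or.inl ⟨en, hen, hpl, rfl⟩
  · rintro (⟨en, hen, hpl, rfl⟩ | ⟨en, hen, hpl, rfl⟩)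
    · exact ⟨piEntry en, by simp [piDL, List.mem_map]; exact ⟨en, hen, rfl⟩,
        by rw [piEntry_plus hpl]; rfl⟩
    · exact ⟨piEntry en, by simp [piDL, List.mem_map]; exact ⟨en, hen, rfl⟩,
        by rw [piEntry_minus hpl]; rfl⟩

lemma piBAtom_mem_HB {P : Set (Rule S)} {B : DLAtom S} :
    piBAtom B ∈ HB (piStarProg P) ↔ HcondB P B := by
  constructor
  · rintro ⟨r', hr', hp⟩
    have hpB : (piBAtom B).p = Sum.inr (Sum.inr B) := rfl
    rw [hpB] at hp
    rcases mem_piStarProg.mp hr' with ⟨r, hr, rfl⟩ | ⟨r, hr, C, hC, rfl⟩ |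
        ⟨r, hr, C, hC, p, hop, e, rfl⟩
    · rcases mem_preds_iff.mp hp with h | ⟨b, hb, h⟩ | ⟨b, hb, h⟩
      · exact absurd h (by intro hh; first | (injection hh with hh; injection hh) | injection hh)
      · obtain ⟨a, ha, rfl⟩ := mem_filterMap_piStarPos.mp hb
        replace h := preds_atom.mp h
        exact absurd h (by intro hh; first | (injection hh with hh; injection hh) | injection hh)
      · rcases List.mem_append.mp hb with hb | hb
        · obtain ⟨C, hC, rfl⟩ := mem_filterMap_piStarPosNeg.mp hb
          replace h := preds_atom.mp h
          have : C = B := by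
            injection h with h; injection h with h
            try first | exact h | exact h.symm
          exact ⟨r, hr, this ▸ hC⟩
        · obtain ⟨c, hc, rfl⟩ := List.mem_map.mp hb
          cases c with
          | atom a =>
              rw [show piNeg (.atom a) = .atom (embA a) from rfl] at h; replace h := preds_atom.mp h
              exact absurd h (by intro hh; first | (injection hh with hh; injection hh) | injection hh)
          | dl C =>
              rcases preds_piDL.mp h with ⟨en, _, _, h'⟩ | ⟨en, _, _, h'⟩ <;>
                exact absurd h' (by intro hh; first | (injection hh with hh; injection hh) | injection hh)
    · rcases mem_preds_iff.mp hp with h | ⟨b, hb, h⟩ | ⟨b, hb, h⟩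
      · have : C = B := by
          simp only [piBAtom] at h
          injection h with h; injection h with h
          try first | exact h | exact h.symm
        exact ⟨r, hr, this ▸ hC⟩
      · simp at hb
      · rw [List.mem_singleton] at hb
        subst hb
        rcases preds_piDL.mp h with ⟨en, _, _, h'⟩ | ⟨en, _, _, h'⟩ <;>
          exact absurd h' (by intro hh; first | (injection hh with hh; injection hh) | injection hh)
    · rcases mem_preds_iff.mp hp with h | ⟨b, hb, h⟩ | ⟨b, hb, h⟩
      · exact absurd h (by intro hh; first | (injection hh with hh; injection hh) | injection hh)
      · simp at hb
      · rw [List.mem_singleton] at hb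
        subst hb
        replace h := preds_atom.mp h
        exact absurd h (by intro hh; first | (injection hh with hh; injection hh) | injection hh)
  · rintro ⟨r, hr, hB⟩
    refine ⟨⟨piBAtom B, [], [.dl (piDL B)]⟩,
      mem_piStarProg.mpr (Or.inr (Or.inl ⟨r, hr, B, hB, rfl⟩)), ?_⟩
    exact mem_preds_iff.mpr (Or.inl rfl)

lemma piPAtom_mem_HB {P : Set (Rule S)} {p : S.PP} {e} :
    piPAtom p e ∈ HB (piStarProg P) ↔ Hcond P p := by
  constructor
  · rintro ⟨r', hr', hp⟩
    have hpB : (piPAtom p e).p = Sum.inr (Sum.inl p) := rfl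
    rw [hpB] at hp
    rcases mem_piStarProg.mp hr' with ⟨r, hr, rfl⟩ | ⟨r, hr, C, hC, rfl⟩ |
        ⟨r, hr, C, hC, q, hop, e', rfl⟩
    · rcases mem_preds_iff.mp hp with h | ⟨b, hb, h⟩ | ⟨b, hb, h⟩
      · exact absurd h (by intro hh; first | (injection hh with hh; injection hh) | injection hh)
      · obtain ⟨a, ha, rfl⟩ := mem_filterMap_piStarPos.mp hb
        replace h := preds_atom.mp h
        exact absurd h (by intro hh; first | (injection hh with hh; injection hh) | injection hh)
      · rcases List.mem_append.mp hb with hb | hb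
        · obtain ⟨C, hC, rfl⟩ := mem_filterMap_piStarPosNeg.mp hb
          replace h := preds_atom.mp h
          exact absurd h (by intro hh; first | (injection hh with hh; injection hh) | injection hh)
        · obtain ⟨c, hc, rfl⟩ := List.mem_map.mp hb
          cases c with
          | atom a =>
              rw [show piNeg (.atom a) = .atom (embA a) from rfl] at h; replace h := preds_atom.mp h
              exact absurd h (by intro hh; first | (injection hh with hh; injection hh) | injection hh)
          | dl C =>
              rcases preds_piDL.mp h with ⟨en, hen, hpl, h'⟩ | ⟨en, hen, hpl, h'⟩
              · exact absurd h' (by intro hh; first | (injection hh with hh; injection hh) | injection hh)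
              · have hq : p = en.p := by
                  injection h' with h'; injection h' with h'
                  try first | exact h' | exact h'.symm
                refine ⟨r, hr, C, Or.inr hc, en, hen, hpl, hq.symm⟩
    · rcases mem_preds_iff.mp hp with h | ⟨b, hb, h⟩ | ⟨b, hb, h⟩
      · exact absurd h (by intro hh; first | (injection hh with hh; injection hh) | injection hh)
      · simp at hb
      · rw [List.mem_singleton] at hb
        subst hb
        rcases preds_piDL.mp h with ⟨en, hen, hpl, h'⟩ | ⟨en, hen, hpl, h'⟩
        · exact absurd h' (by intro hh; first | (injection hh with hh; injection hh) | injection hh)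
        · have hq : p = en.p := by
            injection h' with h'; injection h' with h'
            try first | exact h' | exact h'.symm
          exact ⟨r, hr, C, Or.inl hC, en, hen, hpl, hq.symm⟩
    · rcases mem_preds_iff.mp hp with h | ⟨b, hb, h⟩ | ⟨b, hb, h⟩
      · have hq : p = q := by
          injection h with h; injection h with h
          try first | exact h | exact h.symm
        exact hq ▸ ⟨r, hr, C, hC, hop⟩
      · simp at hb
      · rw [List.mem_singleton] at hb
        subst hb
        replace h := preds_atom.mp h
        exact absurd h (by intro hh; first | (injection hh with hh; injection hh) | injection hh)
  · rintro ⟨r, hr, B, hB, hom⟩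
    refine ⟨⟨piPAtom p e, [], [.atom (embA ⟨p, e⟩)]⟩,
      mem_piStarProg.mpr (Or.inr (Or.inr ⟨r, hr, B, hB, p, hom, e, rfl⟩)), ?_⟩
    exact mem_preds_iff.mpr (Or.inl rfl)

lemma embA_mem_HB {P : Set (Rule S)} {x : PAtom S} (h : embA x ∈ HB (piStarProg P)) :
    x ∈ HB P := by
  obtain ⟨r', hr', hp⟩ := h
  have hpB : (embA x).p = Sum.inl x.p := rfl
  rw [hpB] at hp
  rcases mem_piStarProg.mp hr' with ⟨r, hr, rfl⟩ | ⟨r, hr, C, hC, rfl⟩ |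
      ⟨r, hr, C, hC, q, hop, e', rfl⟩
  · refine ⟨r, hr, ?_⟩
    rcases mem_preds_iff.mp hp with h | ⟨b, hb, h⟩ | ⟨b, hb, h⟩
    · have : x.p = r.head.p := by
        simp only [piStarRuleMain, embA] at h
        injection h with h
      exact mem_preds_iff.mpr (Or.inl this)
    · obtain ⟨a, ha, rfl⟩ := mem_filterMap_piStarPos.mp hb
      replace h := preds_atom.mp h
      have : x.p = a.p := by simp only [embA] at h; injection h with h
      exact mem_preds_iff.mpr (Or.inr (Or.inl ⟨.atom a, ha, preds_atom.mpr this⟩))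
    · rcases List.mem_append.mp hb with hb | hb
      · obtain ⟨C, hC, rfl⟩ := mem_filterMap_piStarPosNeg.mp hb
        replace h := preds_atom.mp h
        exact absurd h (by intro hh; first | (injection hh with hh; injection hh) | injection hh)
      · obtain ⟨c, hc, rfl⟩ := List.mem_map.mp hb
        cases c with
        | atom a =>
            rw [show piNeg (.atom a) = .atom (embA a) from rfl] at h; replace h := preds_atom.mp h
            have : x.p = a.p := by injection h with h; try first | exact h | exact h.symm
            exact mem_preds_iff.mpr (Or.inr (Or.inr ⟨.atom a, hc, preds_atom.mpr this⟩))
        | dl C =>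
            rcases preds_piDL.mp h with ⟨en, hen, hpl, h'⟩ | ⟨en, hen, hpl, h'⟩
            · have : en.p = x.p := by injection h' with h'; exact h'.symm
              exact mem_preds_iff.mpr (Or.inr (Or.inr ⟨.dl C, hc, preds_dl.mpr ⟨en, hen, this⟩⟩))
            · exact absurd h' (by intro hh; first | (injection hh with hh; injection hh) | injection hh)
  · refine ⟨r, hr, ?_⟩
    rcases mem_preds_iff.mp hp with h | ⟨b, hb, h⟩ | ⟨b, hb, h⟩
    · exact absurd h (by intro hh; first | (injection hh with hh; injection hh) | injection hh)
    · simp at hb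
    · rw [List.mem_singleton] at hb
      subst hb
      rcases preds_piDL.mp h with ⟨en, hen, hpl, h'⟩ | ⟨en, hen, hpl, h'⟩
      · have : en.p = x.p := by injection h' with h'; exact h'.symm
        exact mem_preds_iff.mpr (Or.inr (Or.inl ⟨.dl C, hC, preds_dl.mpr ⟨en, hen, this⟩⟩))
      · exact absurd h' (by intro hh; first | (injection hh with hh; injection hh) | injection hh)
  · refine ⟨r, hr, ?_⟩
    rcases mem_preds_iff.mp hp with h | ⟨b, hb, h⟩ | ⟨b, hb, h⟩
    · exact absurd h (by intro hh; first | (injection hh with hh; injection hh) | injection hh)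
    · simp at hb
    · rw [List.mem_singleton] at hb
      subst hb
      replace h := preds_atom.mp h
      have hxq : x.p = q := by injection h with h; try first | exact h | exact h.symm
      obtain ⟨en, hen, hpl, hq⟩ := hop
      have : en.p = x.p := by rw [hq, hxq]
      rcases hC with hC | hC
      · exact mem_preds_iff.mpr (Or.inr (Or.inl ⟨.dl C, hC, preds_dl.mpr ⟨en, hen, this⟩⟩))
      · exact mem_preds_iff.mpr (Or.inr (Or.inr ⟨.dl C, hC, preds_dl.mpr ⟨en, hen, this⟩⟩))

end
end DLP
namespace DLP
noncomputable section
attribute [local instance] Classical.propDecidable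

variable {S : DLSig}

/-- The `π_p`-facts contributed to a weak answer set. -/
def F1 (P : Set (Rule S)) (I : Set (PAtom S)) : Set (PAtom (piSig S)) :=
  { a | ∃ p e, a = piPAtom p e ∧ Hcond P p ∧ (⟨p, e⟩ : PAtom S) ∉ I }

/-- The `π_B`-facts contributed to a weak answer set. -/
def F2 (O : Set (Fml S.fol)) (P : Set (Rule S)) (I : Set (PAtom S)) :
    Set (PAtom (piSig S)) :=
  { a | ∃ B, HcondB P B ∧ ¬ SatDL O I B ∧ a = piBAtom B }

lemma filter_filterMap_piStarPos (l : List (BElem S)) :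
    (l.filterMap piStarPos).filter (fun b => decide (∃ a, b = BElem.atom a))
      = l.filterMap piStarPos := by
  rw [List.filter_eq_self]
  intro b hb
  obtain ⟨a, _, rfl⟩ := mem_filterMap_piStarPos.mp hb
  simp

/-- The core correspondence between the least fixpoints of the weak reducts. -/
lemma lfp_piStar_eq (O : Set (Fml S.fol)) (P : Set (Rule S))
    {I : Set (PAtom S)} {Istar : Set (PAtom (piSig S))}
    (P1 : ∀ x : PAtom S, embA x ∈ Istar ↔ x ∈ I)
    (P2 : ∀ (p : S.PP) (e), piPAtom p e ∈ Istar ↔ Hcond P p ∧ (⟨p, e⟩ : PAtom S) ∉ I)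
    (P3 : ∀ B : DLAtom S, piBAtom B ∈ Istar ↔ HcondB P B ∧ ¬ SatDL O I B) :
    lfpGamma (piO O) (wReduct (piO O) (piStarProg P) Istar)
      = embA '' lfpGamma O (wReduct O P I) ∪ F1 P I ∪ F2 O P I := by
  have hSatEq : ∀ B : DLAtom S, (∃ r ∈ P, BElem.dl B ∈ r.pos ∨ BElem.dl B ∈ r.neg) →
      (SatDL (piO O) Istar (piDL B) ↔ SatDL O I B) := by
    rintro B ⟨r, hr, hBor⟩
    exact satDL_pi O P B P1 P2 (fun p hop => ⟨r, hr, B, hBor, hop⟩)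
  apply Set.Subset.antisymm
  · -- ⊆
    intro a ha
    obtain ⟨k, hk⟩ := mem_lfpGamma_iff.mp ha
    clear ha
    induction k generalizing a with
    | zero => exact absurd hk (Set.notMem_empty a)
    | succ k ih =>
        obtain ⟨rstar, hrstar, hhead, hpos⟩ := hk
        obtain ⟨r'', h'', hdl, hneg, rfl⟩ := hrstar
        rcases mem_piStarProg.mp h'' with ⟨r, hr, rfl⟩ | ⟨r, hr, B, hB, rfl⟩ |
            ⟨r, hr, B, hBor, p, hop, e, rfl⟩
        · -- main rule
          cases hhead
          left; left
          refine ⟨r.head, ?_, rfl⟩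
          have hC1 : ∀ A : DLAtom S, BElem.dl A ∈ r.pos → SatDL O I A := by
            intro A hA
            have hmem : BElem.atom (piBAtom A) ∈ (piStarRuleMain r).neg :=
              List.mem_append_left _ (mem_filterMap_piStarPosNeg.mpr ⟨A, hA, rfl⟩)
            have hnm : piBAtom A ∉ Istar := hneg _ hmem
            by_contra hns
            exact hnm ((P3 A).mpr ⟨⟨r, hr, hA⟩, hns⟩)
          have hC2 : ∀ b ∈ r.neg, ¬ SatB O I b := by
            intro b hb
            cases b with
            | atom x =>
                have hmem : BElem.atom (embA x) ∈ (piStarRuleMain r).neg :=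
                  List.mem_append_right _ (List.mem_map.mpr ⟨.atom x, hb, rfl⟩)
                have := hneg _ hmem
                exact fun hx => this ((P1 x).mpr hx)
            | dl B =>
                have hmem : BElem.dl (piDL B) ∈ (piStarRuleMain r).neg :=
                  List.mem_append_right _ (List.mem_map.mpr ⟨.dl B, hb, rfl⟩)
                have := hneg _ hmem
                exact fun hx => this ((hSatEq B ⟨r, hr, Or.inr hb⟩).mpr hx)
          have hrw : (⟨r.head, r.pos.filter fun b => decide (∃ a, b = BElem.atom a), []⟩ :
              Rule S) ∈ wReduct O P I := ⟨r, hr, hC1, hC2, rfl⟩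
          refine lfpGamma_closed (wReduct_atomProg O P I)
            (r := ⟨r.head, r.pos.filter fun b => decide (∃ a, b = BElem.atom a), []⟩) hrw ?_
          intro b hb
          have hb2 : b ∈ r.pos.filter (fun b => decide (∃ a, b = BElem.atom a)) := hb
          rw [List.mem_filter, decide_eq_true_eq] at hb2
          obtain ⟨hbpos, x, rfl⟩ := hb2
          show x ∈ lfpGamma O (wReduct O P I)
          have hsat : SatB (piO O) (gammaIter (piO O)
              (wReduct (piO O) (piStarProg P) Istar) k) (BElem.atom (embA x)) := by
            apply hpos
            show BElem.atom (embA x) ∈ List.filter _ (List.filterMap piStarPos r.pos)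
            rw [filter_filterMap_piStarPos]
            exact mem_filterMap_piStarPos.mpr ⟨x, hbpos, rfl⟩
          have hx : embA x ∈ embA '' lfpGamma O (wReduct O P I) ∪ F1 P I ∪ F2 O P I :=
            ih hsat
          rcases hx with (⟨y, hy, hxy⟩ | ⟨p, e, hpe, _, _⟩) | ⟨B, _, _, hpe⟩
          · rwa [← embA_inj hxy]
          · exact absurd hpe embA_ne_piPAtom
          · exact absurd hpe embA_ne_piBAtom
        · -- type-2 rule
          cases hhead
          right
          have hmem : BElem.dl (piDL B) ∈
              (⟨piBAtom B, [], [.dl (piDL B)]⟩ : Rule (piSig S)).neg :=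
            List.mem_singleton.mpr rfl
          have hns : ¬ SatDL O I B :=
            fun hx => hneg _ hmem ((hSatEq B ⟨r, hr, Or.inl hB⟩).mpr hx)
          exact ⟨B, ⟨r, hr, hB⟩, hns, rfl⟩
        · -- type-3 rule
          cases hhead
          left; right
          have hmem : BElem.atom (embA ⟨p, e⟩) ∈
              (⟨piPAtom p e, [], [.atom (embA ⟨p, e⟩)]⟩ : Rule (piSig S)).neg :=
            List.mem_singleton.mpr rfl
          have hni : (⟨p, e⟩ : PAtom S) ∉ I := fun hx => hneg _ hmem ((P1 _).mpr hx)
          exact ⟨p, e, rfl, ⟨r, hr, B, hBor, hop⟩, hni⟩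
  · -- ⊇
    rintro a ((⟨x, hx, rfl⟩ | ⟨p, e, rfl, hc, hni⟩) | ⟨B, hcb, hns, rfl⟩)
    · -- embA '' lfp
      obtain ⟨k, hk⟩ := mem_lfpGamma_iff.mp hx
      clear hx
      induction k generalizing x with
      | zero => exact absurd hk (Set.notMem_empty x)
      | succ k ih =>
          obtain ⟨r', hr', hhead, hpos⟩ := hk
          obtain ⟨r, hr, hC1, hC2, rfl⟩ := hr'
          cases hhead
          have hmain : piStarRuleMain r ∈ piStarProg P :=
            mem_piStarProg.mpr (Or.inl ⟨r, hr, rfl⟩)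
          have hred : (⟨(piStarRuleMain r).head,
              (piStarRuleMain r).pos.filter fun b => decide (∃ a, b = BElem.atom a), []⟩ :
              Rule (piSig S)) ∈ wReduct (piO O) (piStarProg P) Istar := by
            refine ⟨piStarRuleMain r, hmain, ?_, ?_, rfl⟩
            · intro A hA
              obtain ⟨a', _, hA'⟩ := mem_filterMap_piStarPos.mp hA
              exact absurd hA' (by intro hcon; cases hcon)
            · intro b hb
              rcases List.mem_append.mp hb with hb | hb
              · obtain ⟨B, hBpos, rfl⟩ := mem_filterMap_piStarPosNeg.mp hb
                intro hmem
                exact ((P3 B).mp hmem).2 (hC1 B hBpos)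
              · obtain ⟨c, hc, rfl⟩ := List.mem_map.mp hb
                cases c with
                | atom x' =>
                    intro hmem
                    exact hC2 _ hc ((P1 x').mp hmem)
                | dl B =>
                    intro hmem
                    exact hC2 _ hc ((hSatEq B ⟨r, hr, Or.inr hc⟩).mp hmem)
          refine lfpGamma_closed
            (wReduct_atomProg (piO O) (piStarProg P) Istar)
            (r := ⟨(piStarRuleMain r).head,
              (piStarRuleMain r).pos.filter fun b => decide (∃ a, b = BElem.atom a), []⟩)
            hred ?_
          intro b hb
          have hb2 : b ∈ (r.pos.filterMap piStarPos).filter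
              (fun b => decide (∃ a, b = BElem.atom a)) := hb
          rw [filter_filterMap_piStarPos] at hb2
          obtain ⟨x', hx', rfl⟩ := mem_filterMap_piStarPos.mp hb2
          show embA x' ∈ lfpGamma (piO O) (wReduct (piO O) (piStarProg P) Istar)
          have hmem2 : BElem.atom x' ∈ (⟨r.head,
              r.pos.filter fun b => decide (∃ a, b = BElem.atom a), []⟩ : Rule S).pos := by
            have h5 : BElem.atom x' ∈ r.pos.filter
                (fun b => decide (∃ a, b = BElem.atom a)) :=
              List.mem_filter.mpr ⟨hx', by simp⟩
            exact h5
          exact ih x' (hpos _ hmem2)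
    · -- F1
      obtain ⟨r, hr, B, hBor, hop⟩ := hc
      have h3 : (⟨piPAtom p e, [], [.atom (embA ⟨p, e⟩)]⟩ : Rule (piSig S)) ∈ piStarProg P :=
        mem_piStarProg.mpr (Or.inr (Or.inr ⟨r, hr, B, hBor, p, hop, e, rfl⟩))
      have hred : (⟨piPAtom p e, [], []⟩ : Rule (piSig S)) ∈
          wReduct (piO O) (piStarProg P) Istar := by
        refine ⟨_, h3, ?_, ?_, rfl⟩
        · intro A hA; simp at hA
        · intro b hb
          rw [List.mem_singleton] at hb
          subst hb
          intro hmem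
          exact hni ((P1 _).mp hmem)
      exact head_mem_lfpGamma hred rfl
    · -- F2
      obtain ⟨r, hr, hB⟩ := hcb
      have h2 : (⟨piBAtom B, [], [.dl (piDL B)]⟩ : Rule (piSig S)) ∈ piStarProg P :=
        mem_piStarProg.mpr (Or.inr (Or.inl ⟨r, hr, B, hB, rfl⟩))
      have hred : (⟨piBAtom B, [], []⟩ : Rule (piSig S)) ∈
          wReduct (piO O) (piStarProg P) Istar := by
        refine ⟨_, h2, ?_, ?_, rfl⟩
        · intro A hA; simp at hA
        · intro b hb
          rw [List.mem_singleton] at hb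
          subst hb
          intro hmem
          exact hns ((hSatEq B ⟨r, hr, Or.inl hB⟩).mp hmem)
      exact head_mem_lfpGamma hred rfl

end
end DLP
namespace DLP
noncomputable section
attribute [local instance] Classical.propDecidable

variable {S : DLSig}

section DirI

variable (O : Set (Fml S.fol)) (P : Set (Rule S)) (I : Set (PAtom S))

lemma piStarSet_P1 : ∀ x : PAtom S, embA x ∈ piStarSet O P I ↔ x ∈ I := by
  intro x
  constructor
  · rintro ((⟨y, hy, heq⟩ | ⟨p, e, heq, _, _⟩) | ⟨B, _, _, heq, _⟩)
    · rwa [← embA_inj heq]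
    · exact absurd heq embA_ne_piPAtom
    · exact absurd heq embA_ne_piBAtom
  · intro hx; exact Or.inl (Or.inl ⟨x, hx, rfl⟩)

lemma piStarSet_P2 : ∀ (p : S.PP) (e), piPAtom p e ∈ piStarSet O P I ↔
    Hcond P p ∧ (⟨p, e⟩ : PAtom S) ∉ I := by
  intro p e
  constructor
  · rintro ((⟨y, hy, heq⟩ | ⟨p', e', heq, hHB, hni⟩) | ⟨B, _, _, heq, _⟩)
    · exact absurd heq embA_ne_piPAtom
    · have h2 := piPAtom_inj heq
      have hp : p = p' := congrArg PAtom.p h2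
      subst hp
      exact ⟨piPAtom_mem_HB.mp (heq ▸ hHB), fun hmem => hni (h2 ▸ hmem)⟩
    · exact absurd heq piPAtom_ne_piBAtom
  · rintro ⟨hc, hni⟩
    exact Or.inl (Or.inr ⟨p, e, rfl, piPAtom_mem_HB.mpr hc, hni⟩)

lemma piStarSet_P3 : ∀ B : DLAtom S, piBAtom B ∈ piStarSet O P I ↔
    HcondB P B ∧ ¬ SatDL O I B := by
  intro B
  constructor
  · rintro ((⟨y, hy, heq⟩ | ⟨p, e, heq, _, _⟩) | ⟨B', hB'dl, hns, heq, hHB⟩)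
    · exact absurd heq embA_ne_piBAtom
    · exact absurd heq.symm piPAtom_ne_piBAtom
    · have hBB : B = B' := piBAtom_inj heq
      subst hBB
      exact ⟨piBAtom_mem_HB.mp hHB, hns⟩
  · rintro ⟨hcb, hns⟩
    refine Or.inr ⟨B, ?_, hns, rfl, piBAtom_mem_HB.mpr hcb⟩
    obtain ⟨r, hr, hp⟩ := hcb
    exact ⟨r, hr, Or.inl hp⟩

lemma piStarSet_eq : piStarSet O P I = embA '' I ∪ F1 P I ∪ F2 O P I := by
  unfold piStarSet
  congr 1
  · congr 1
    ext a
    constructor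
    · rintro ⟨p, e, rfl, hHB, hni⟩; exact ⟨p, e, rfl, piPAtom_mem_HB.mp hHB, hni⟩
    · rintro ⟨p, e, rfl, hc, hni⟩; exact ⟨p, e, rfl, piPAtom_mem_HB.mpr hc, hni⟩
  · ext a
    constructor
    · rintro ⟨B, hBdl, hns, rfl, hHB⟩; exact ⟨B, piBAtom_mem_HB.mp hHB, hns, rfl⟩
    · rintro ⟨B, hcb, hns, rfl⟩
      obtain ⟨r, hr, hp⟩ := hcb
      exact ⟨B, ⟨r, hr, Or.inl hp⟩, hns, rfl, piBAtom_mem_HB.mpr ⟨r, hr, hp⟩⟩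

end DirI

section DirII

variable {O : Set (Fml S.fol)} {P : Set (Rule S)} {Istar : Set (PAtom (piSig S))}

lemma ii_P1 (hsub : Istar ⊆ HB (piStarProg P)) : ∀ x : PAtom S,
    embA x ∈ Istar ↔ x ∈ (embA ⁻¹' Istar) ∩ HB P :=
  fun x => ⟨fun h => ⟨h, embA_mem_HB (hsub h)⟩, fun h => h.1⟩

lemma mem_Istar_elim
    (hW : Istar = lfpGamma (piO O) (wReduct (piO O) (piStarProg P) Istar))
    {a : PAtom (piSig S)} (ha : a ∈ Istar) :
    ∃ rstar ∈ wReduct (piO O) (piStarProg P) Istar, rstar.head = a := by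
  rw [hW] at ha
  obtain ⟨k, hk⟩ := mem_lfpGamma_iff.mp ha
  cases k with
  | zero => exact absurd hk (Set.notMem_empty a)
  | succ k =>
      obtain ⟨rstar, hrstar, hhead, _⟩ := hk
      exact ⟨rstar, hrstar, hhead⟩

lemma ii_P2 (hsub : Istar ⊆ HB (piStarProg P))
    (hW : Istar = lfpGamma (piO O) (wReduct (piO O) (piStarProg P) Istar)) :
    ∀ (p : S.PP) (e), piPAtom p e ∈ Istar ↔
    Hcond P p ∧ (⟨p, e⟩ : PAtom S) ∉ (embA ⁻¹' Istar) ∩ HB P := by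
  intro p e
  constructor
  · intro h
    obtain ⟨rstar, ⟨r'', h'', hdl, hneg, rfl⟩, hhead⟩ := mem_Istar_elim hW h
    rcases mem_piStarProg.mp h'' with ⟨r, hr, rfl⟩ | ⟨r, hr, B, hB, rfl⟩ |
        ⟨r, hr, B, hBor, q, hop, e', rfl⟩
    · exact absurd hhead embA_ne_piPAtom
    · exact absurd hhead.symm piPAtom_ne_piBAtom
    · have h2 := piPAtom_inj (show piPAtom q e' = piPAtom p e from hhead)
      have hq : q = p := congrArg PAtom.p h2
      have hmemneg : BElem.atom (embA ⟨q, e'⟩) ∈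
          (⟨piPAtom q e', [], [.atom (embA ⟨q, e'⟩)]⟩ : Rule (piSig S)).neg :=
        List.mem_singleton.mpr rfl
      have hni : embA (⟨q, e'⟩ : PAtom S) ∉ Istar := hneg _ hmemneg
      refine ⟨hq ▸ ⟨r, hr, B, hBor, hop⟩, fun hmem => ?_⟩
      exact hni (by rw [h2]; exact hmem.1)
  · rintro ⟨hc, hni⟩
    obtain ⟨r, hr, B, hBor, hop⟩ := hc
    have h3 : (⟨piPAtom p e, [], [.atom (embA ⟨p, e⟩)]⟩ : Rule (piSig S)) ∈ piStarProg P :=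
      mem_piStarProg.mpr (Or.inr (Or.inr ⟨r, hr, B, hBor, p, hop, e, rfl⟩))
    have hred : (⟨piPAtom p e, [], []⟩ : Rule (piSig S)) ∈
        wReduct (piO O) (piStarProg P) Istar := by
      refine ⟨_, h3, ?_, ?_, rfl⟩
      · intro A hA; simp at hA
      · intro b hb
        rw [List.mem_singleton] at hb
        subst hb
        intro hmem
        exact hni ⟨hmem, embA_mem_HB (hsub hmem)⟩
    have := head_mem_lfpGamma (O := piO O) hred rfl
    rw [hW]
    exact this
  
lemma ii_P3 (hsub : Istar ⊆ HB (piStarProg P))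
    (hW : Istar = lfpGamma (piO O) (wReduct (piO O) (piStarProg P) Istar)) :
    ∀ B : DLAtom S, piBAtom B ∈ Istar ↔
    HcondB P B ∧ ¬ SatDL O ((embA ⁻¹' Istar) ∩ HB P) B := by
  have hSatEq : ∀ B : DLAtom S, (∃ r ∈ P, BElem.dl B ∈ r.pos ∨ BElem.dl B ∈ r.neg) →
      (SatDL (piO O) Istar (piDL B) ↔ SatDL O ((embA ⁻¹' Istar) ∩ HB P) B) := by
    rintro B ⟨r, hr, hBor⟩
    exact satDL_pi O P B (ii_P1 hsub) (ii_P2 hsub hW) (fun p hop => ⟨r, hr, B, hBor, hop⟩)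
  intro B
  constructor
  · intro h
    obtain ⟨rstar, ⟨r'', h'', hdl, hneg, rfl⟩, hhead⟩ := mem_Istar_elim hW h
    rcases mem_piStarProg.mp h'' with ⟨r, hr, rfl⟩ | ⟨r, hr, B', hB', rfl⟩ |
        ⟨r, hr, B', hBor, q, hop, e', rfl⟩
    · exact absurd hhead embA_ne_piBAtom
    · have hBB : B' = B := piBAtom_inj hhead
      subst hBB
      have hmemneg : BElem.dl (piDL B') ∈
          (⟨piBAtom B', [], [.dl (piDL B')]⟩ : Rule (piSig S)).neg :=
        List.mem_singleton.mpr rfl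
      have hns : ¬ SatDL (piO O) Istar (piDL B') := hneg _ hmemneg
      exact ⟨⟨r, hr, hB'⟩, fun hs => hns ((hSatEq B' ⟨r, hr, Or.inl hB'⟩).mpr hs)⟩
    · exact absurd hhead piPAtom_ne_piBAtom
  · rintro ⟨hcb, hns⟩
    obtain ⟨r, hr, hB⟩ := hcb
    have h2 : (⟨piBAtom B, [], [.dl (piDL B)]⟩ : Rule (piSig S)) ∈ piStarProg P :=
      mem_piStarProg.mpr (Or.inr (Or.inl ⟨r, hr, B, hB, rfl⟩))
    have hred : (⟨piBAtom B, [], []⟩ : Rule (piSig S)) ∈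
        wReduct (piO O) (piStarProg P) Istar := by
      refine ⟨_, h2, ?_, ?_, rfl⟩
      · intro A hA; simp at hA
      · intro b hb
        rw [List.mem_singleton] at hb
        subst hb
        intro hmem
        exact hns ((hSatEq B ⟨r, hr, Or.inl hB⟩).mp hmem)
    have := head_mem_lfpGamma (O := piO O) hred rfl
    rw [hW]
    exact this

end DirII

end
end DLP

open DLP in
/-- The translation `π*` preserves weak answer sets:
(i) if `I` is a weak answer set of `K`, then `π*(I)` is a weak answer set of
`π*(K)`; (ii) if `I*` is a weak answer set of `π*(K)`, then `I* ∩ HB_P` is a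
weak answer set of `K`. -/
theorem stmt_8 (S : DLSig) (O : Set (Fml S.fol)) (P : Set (Rule S))
    (hOfin : O.Finite) (hPfin : P.Finite)
    (hO : ∀ φ ∈ O, OntoFml φ) (hQ : ∀ A ∈ DLatoms P, OntoFml A.Q) :
    (∀ I : Set (PAtom S), I ⊆ HB P → WeakAS O P I →
        WeakAS (piO O) (piStarProg P) (piStarSet O P I)) ∧
    (∀ Istar : Set (PAtom (piSig S)), Istar ⊆ HB (piStarProg P) →
        WeakAS (piO O) (piStarProg P) Istar →
        WeakAS O P ((embA ⁻¹' Istar) ∩ HB P)) := by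
  constructor
  · -- (i)
    intro I hIHB hWAS
    have hW : I = lfpGamma O (wReduct O P I) := hWAS
    show piStarSet O P I = _
    rw [lfp_piStar_eq O P (piStarSet_P1 O P I) (piStarSet_P2 O P I) (piStarSet_P3 O P I)]
    rw [piStarSet_eq, ← hW]
  · -- (ii)
    intro Istar hsub hWAS
    have hW : Istar = lfpGamma (piO O) (wReduct (piO O) (piStarProg P) Istar) := hWAS
    have hcore := lfp_piStar_eq O P (ii_P1 hsub) (ii_P2 hsub hW) (ii_P3 hsub hW)
    show (embA ⁻¹' Istar) ∩ HB P
      = lfpGamma O (wReduct O P ((embA ⁻¹' Istar) ∩ HB P))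
    ext x
    constructor
    · intro hx
      have h1 : embA x ∈ Istar := hx.1
      rw [hW, hcore] at h1
      rcases h1 with (⟨y, hy, hxy⟩ | ⟨p, e, hpe, _, _⟩) | ⟨B, _, _, hpe⟩
      · rwa [← embA_inj hxy]
      · exact absurd hpe embA_ne_piPAtom
      · exact absurd hpe embA_ne_piBAtom
    · intro hx
      refine ⟨?_, lfpGamma_wReduct_sub_HB O P _ hx⟩
      show embA x ∈ Istar
      rw [hW, hcore]
      exact Or.inl (Or.inl ⟨x, hx, rfl⟩)
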